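/- Let G = (V,E) be a d-regular graph on n vertices. Assign each vertex v an independent uniform bit X(v), and each edge e an independent bit Z(e) which is 1 with probability ε. Label each edge (u,v) by Y(u,v) = X(u)+X(v)+Z(u,v) mod 2, and form the 2-lift G′ as above using labels Y. Then with probability at least 1 − e^{−εnd/6}, there exists a set V* ⊆ V×{0,1} with |V*| = n whose edge expansion in G′ is at most 2ε. -/

import Mathlib

open scoped Classical

/-- The 2-lift of a graph `G` determined by an edge labelling `ℓ`: vertices `V × Bool`,
and `(u,a)` is adjacent to `(v,b)` iff `G.Adj u v` and `a xor b = ℓ s(u,v)`. -/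
def lift2 {V : Type*} (G : SimpleGraph V) (ℓ : Sym2 V → Bool) :
    SimpleGraph (V × Bool) where
  Adj p q := G.Adj p.1 q.1 ∧ xor p.2 q.2 = ℓ s(p.1, q.1)
  symm := by
    constructor
    intro p q h
    refine ⟨h.1.symm, ?_⟩
    rw [Bool.xor_comm, Sym2.eq_swap]
    exact h.2
  loopless := by
    constructor
    intro p h
    exact G.loopless.irrefl p.1 h.1

/-- The noisy-parity edge labelling `Y(u,v) = X(u) + X(v) + Z(u,v)` (as a total
function on `Sym2 V`, junk value `false` off the edge set). -/
noncomputable def labelOf {V : Type*} [Fintype V] [DecidableEq V]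
    (G : SimpleGraph V) [DecidableRel G.Adj]
    (x : V → Bool) (z : {e // e ∈ G.edgeFinset} → Bool) : Sym2 V → Bool :=
  fun e => if h : e ∈ G.edgeFinset then
      xor (z ⟨e, h⟩) (Sym2.lift ⟨fun u w => xor (x u) (x w),
        fun u w => Bool.xor_comm (x u) (x w)⟩ e)
    else false

open Finset in
/-- The cut determined by the diagonal-type set `{(v, x v)}` in the 2-lift with the
noisy-parity labelling consists of exactly two copies of each noisy edge. -/
lemma cut_eq_aux {V : Type*} [Fintype V] [DecidableEq V]
    (G : SimpleGraph V) [DecidableRel G.Adj]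
    (x : V → Bool) (z : {e // e ∈ G.edgeFinset} → Bool) :
    (∑ p ∈ (univ.image fun v => (v, x v)), ∑ q ∈ (univ.image fun v => (v, x v))ᶜ,
        if (lift2 G (labelOf G x z)).Adj p q then (1 : ℝ) else 0)
      = 2 * ∑ e : {e // e ∈ G.edgeFinset}, (if z e then (1 : ℝ) else 0) := by
  have hinj1 : Function.Injective (fun v : V => (v, x v)) := fun a b h => congrArg Prod.fst h
  have hinj2 : Function.Injective (fun v : V => (v, !x v)) := fun a b h => congrArg Prod.fst h
  have hcompl : (univ.image fun v : V => (v, x v))ᶜ = univ.image fun v : V => (v, !x v) := by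
    ext ⟨v, b⟩
    simp only [mem_compl, mem_image, mem_univ, true_and, Prod.mk.injEq]
    constructor
    · intro h
      refine ⟨v, rfl, ?_⟩
      cases hb : b <;> cases hxv : x v <;> simp_all
    · rintro ⟨a, rfl, rfl⟩ ⟨a', rfl, h⟩
      simp at h
  rw [hcompl, Finset.sum_image (fun a _ b _ h => hinj1 h)]
  simp only [Finset.sum_image (fun a _ b _ h => hinj2 h)]
  have key : ∀ u v : V, (if (lift2 G (labelOf G x z)).Adj (u, x u) (v, !x v) then (1:ℝ) else 0)
      = if h : G.Adj u v then
          (if z ⟨s(u,v), by simpa [SimpleGraph.mem_edgeFinset] using h⟩ then (1:ℝ) else 0)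
        else 0 := by
    intro u v
    by_cases h : G.Adj u v
    · have hmem : s(u,v) ∈ G.edgeFinset := by simpa [SimpleGraph.mem_edgeFinset] using h
      rw [dif_pos h]
      have hlab : labelOf G x z s(u,v) = xor (z ⟨s(u,v), hmem⟩) (xor (x u) (x v)) := by
        simp [labelOf, hmem]
      have hadj : (lift2 G (labelOf G x z)).Adj (u, x u) (v, !x v)
          ↔ z ⟨s(u,v), hmem⟩ = true := by
        simp only [lift2, hlab, h, true_and]
        cases hz : z ⟨s(u,v), hmem⟩ <;> cases x u <;> cases x v <;> simp
      by_cases hz : z ⟨s(u,v), hmem⟩ <;> simp [hadj, hz]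
    · rw [dif_neg h, if_neg]
      intro hadj
      exact h hadj.1
  simp only [key]
  set g : Sym2 V → ℝ := fun e => if h : e ∈ G.edgeFinset then (if z ⟨e, h⟩ then (1:ℝ) else 0) else 0
    with hg
  have step1 : (∑ u : V, ∑ v : V,
      if h : G.Adj u v then
        (if z ⟨s(u,v), by simpa [SimpleGraph.mem_edgeFinset] using h⟩ then (1:ℝ) else 0)
      else 0)
      = ∑ p ∈ (univ.filter fun p : V × V => G.Adj p.1 p.2), g s(p.1, p.2) := by
    rw [Finset.sum_filter, ← Finset.sum_product']
    apply Finset.sum_congr rfl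
    rintro ⟨u, v⟩ -
    by_cases h : G.Adj u v
    · have hmem : s(u,v) ∈ G.edgeFinset := by simpa [SimpleGraph.mem_edgeFinset] using h
      simp [h, hg, hmem]
    · simp [h]
  rw [step1, Finset.sum_comp g (fun p : V × V => s(p.1, p.2))]
  have himg : (univ.filter fun p : V × V => G.Adj p.1 p.2).image (fun p : V × V => s(p.1, p.2))
      = G.edgeFinset := by
    ext e
    induction e with
    | _ u v =>
      simp only [mem_image, mem_filter, mem_univ, true_and, SimpleGraph.mem_edgeFinset,
        SimpleGraph.mem_edgeSet]
      constructor
      · rintro ⟨⟨a, b⟩, hab, he⟩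
        rw [Sym2.eq_iff] at he
        rcases he with ⟨rfl, rfl⟩ | ⟨rfl, rfl⟩
        · exact hab
        · exact hab.symm
      · intro h
        exact ⟨(u, v), h, rfl⟩
  rw [himg]
  have hfib : ∀ e ∈ G.edgeFinset,
      #{p ∈ (univ.filter fun p : V × V => G.Adj p.1 p.2) | s(p.1, p.2) = e} = 2 := by
    intro e he
    induction e with
    | _ u v =>
      have hadj : G.Adj u v := by simpa [SimpleGraph.mem_edgeFinset] using he
      have : {p ∈ (univ.filter fun p : V × V => G.Adj p.1 p.2) | s(p.1, p.2) = s(u,v)}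
          = {(u, v), (v, u)} := by
        ext ⟨a, b⟩
        simp only [Finset.mem_filter, mem_univ, true_and, mem_insert, mem_singleton,
          Prod.mk.injEq, Sym2.eq_iff]
        constructor
        · rintro ⟨-, ⟨rfl, rfl⟩ | ⟨rfl, rfl⟩⟩
          · exact Or.inl ⟨rfl, rfl⟩
          · exact Or.inr ⟨rfl, rfl⟩
        · rintro (⟨rfl, rfl⟩ | ⟨rfl, rfl⟩)
          · exact ⟨hadj, Or.inl ⟨rfl, rfl⟩⟩
          · exact ⟨hadj.symm, Or.inr ⟨rfl, rfl⟩⟩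
      rw [this, Finset.card_insert_of_notMem, Finset.card_singleton]
      simp only [mem_singleton, Prod.mk.injEq, not_and]
      intro rfl
      exact fun h => (G.ne_of_adj hadj) h.symm
  rw [Finset.sum_congr rfl fun e he => by rw [hfib e he]]
  simp only [nsmul_eq_mul, Nat.cast_ofNat, ← Finset.mul_sum]
  congr 1
  rw [Finset.univ_eq_attach, ← Finset.sum_attach G.edgeFinset g]
  apply Finset.sum_congr rfl
  intro e _
  simp only [hg]
  rw [dif_pos e.prop]

open Finset in
/-- Chernoff-type bound: with probability at least `1 - e^{-εM/3}`, at most `2εM` of `M`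
independent Bernoulli(ε) bits are set. -/
lemma chernoff_aux {E : Type*} [Fintype E] [DecidableEq E] (ε : ℝ) (hε0 : 0 ≤ ε) (hε1 : ε ≤ 1) :
    1 - Real.exp (-(ε * Fintype.card E) / 3) ≤
      ∑ z : E → Bool, (∏ e, if z e then ε else 1 - ε) *
        (if ((#{e : E | z e = true} : ℕ) : ℝ) ≤ 2 * ε * Fintype.card E then 1 else 0) := by
  set M : ℕ := Fintype.card E with hM
  set w : (E → Bool) → ℝ := fun z => ∏ e, if z e then ε else 1 - ε with hw
  have hw0 : ∀ z, 0 ≤ w z := by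
    intro z
    apply Finset.prod_nonneg
    intro e _
    by_cases h : z e <;> simp [h, hε0] <;> linarith
  have hsum1 : ∑ z : E → Bool, w z = 1 := by
    rw [hw, ← Fintype.prod_sum (fun (e : E) (b : Bool) => if b then ε else 1 - ε)]
    simp
  have hpow : ∀ z : E → Bool,
      w z * 2 ^ (#{e : E | z e = true}) = ∏ e, if z e then 2 * ε else 1 - ε := by
    intro z
    have h2 : (2:ℝ) ^ (#{e : E | z e = true}) = ∏ e : E, if z e then (2:ℝ) else 1 := by
      rw [Finset.prod_ite, Finset.prod_const, Finset.prod_const, one_pow, mul_one]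
    rw [h2, hw, ← Finset.prod_mul_distrib]
    apply Finset.prod_congr rfl
    intro e _
    by_cases h : z e <;> simp [h] <;> ring
  have hsum2 : ∑ z : E → Bool, w z * 2 ^ (#{e : E | z e = true}) = (1 + ε) ^ M := by
    simp only [hpow]
    rw [← Fintype.prod_sum (fun (e : E) (b : Bool) => if b then 2 * ε else 1 - ε)]
    rw [Fintype.prod_congr _ _ (fun e => by simp [Fintype.sum_bool]; ring_nf : ∀ e : E,
      (∑ b : Bool, if b then 2 * ε else 1 - ε) = 1 + ε)]
    simp [hM]
  have hAB : (∑ z : E → Bool, w z *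
        (if ((#{e : E | z e = true} : ℕ) : ℝ) ≤ 2 * ε * M then 1 else 0))
      + (∑ z : E → Bool, w z *
        (if ((#{e : E | z e = true} : ℕ) : ℝ) ≤ 2 * ε * M then 0 else 1)) = 1 := by
    have hterm : ∀ z : E → Bool, w z *
          (if ((#{e : E | z e = true} : ℕ) : ℝ) ≤ 2 * ε * M then 1 else 0)
        + w z * (if ((#{e : E | z e = true} : ℕ) : ℝ) ≤ 2 * ε * M then 0 else 1) = w z := by
      intro z
      by_cases h : ((#{e : E | z e = true} : ℕ) : ℝ) ≤ 2 * ε * M <;> simp [h]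
    rw [← Finset.sum_add_distrib, Finset.sum_congr rfl (fun z _ => hterm z), hsum1]
  have hbad : ∑ z : E → Bool, w z *
        (if ((#{e : E | z e = true} : ℕ) : ℝ) ≤ 2 * ε * M then 0 else 1)
      ≤ Real.exp (-(ε * M) / 3) := by
    have step : ∀ z : E → Bool, w z *
          (if ((#{e : E | z e = true} : ℕ) : ℝ) ≤ 2 * ε * M then 0 else 1)
        ≤ (2:ℝ) ^ (-(2 * ε * M)) * (w z * 2 ^ (#{e : E | z e = true})) := by
      intro z
      by_cases h : ((#{e : E | z e = true} : ℕ) : ℝ) ≤ 2 * ε * M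
      · rw [if_pos h, mul_zero]
        exact mul_nonneg (by positivity) (mul_nonneg (hw0 z) (by positivity))
      · rw [if_neg h, mul_one]
        push_neg at h
        have h1 : (1:ℝ) ≤ (2:ℝ) ^ (-(2 * ε * M) + ((#{e : E | z e = true} : ℕ) : ℝ)) :=
          Real.one_le_rpow one_le_two (by linarith)
        calc w z = 1 * w z := (one_mul _).symm
          _ ≤ (2:ℝ) ^ (-(2 * ε * M) + ((#{e : E | z e = true} : ℕ) : ℝ)) * w z :=
              mul_le_mul_of_nonneg_right h1 (hw0 z)
          _ = (2:ℝ) ^ (-(2 * ε * M)) * (w z * 2 ^ (#{e : E | z e = true})) := by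
              rw [Real.rpow_add two_pos, Real.rpow_natCast]; ring
    calc ∑ z : E → Bool, w z *
          (if ((#{e : E | z e = true} : ℕ) : ℝ) ≤ 2 * ε * M then 0 else 1)
        ≤ ∑ z : E → Bool, (2:ℝ) ^ (-(2 * ε * M)) * (w z * 2 ^ (#{e : E | z e = true})) :=
          Finset.sum_le_sum fun z _ => step z
      _ = (2:ℝ) ^ (-(2 * ε * M)) * (1 + ε) ^ M := by rw [← Finset.mul_sum, hsum2]
      _ ≤ Real.exp (Real.log 2 * (-(2 * ε * M))) * Real.exp (M * ε) := by
          rw [← Real.rpow_def_of_pos two_pos]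
          apply mul_le_mul_of_nonneg_left _ (by positivity)
          calc (1 + ε) ^ M ≤ (Real.exp ε) ^ M :=
                pow_le_pow_left₀ (by linarith) (by linarith [Real.add_one_le_exp ε]) M
            _ = Real.exp (M * ε) := (Real.exp_nat_mul ε M).symm
      _ ≤ Real.exp (-(ε * M) / 3) := by
          rw [← Real.exp_add, Real.exp_le_exp]
          have hlog := Real.log_two_gt_d9
          have htM : (0:ℝ) ≤ ε * M := mul_nonneg hε0 (Nat.cast_nonneg M)
          nlinarith
  linarith

open Finset in
set_option maxHeartbeats 1000000 in
/-- For a `d`-regular graph `G` on `n` vertices with i.i.d. uniform vertex bits `X` and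
independent Bernoulli(ε) edge noise `Z`, labelling edges by `Y = X(u)+X(v)+Z(e)`, with
probability at least `1 - e^{-εnd/6}` the 2-lift `G'` contains a set `V*` of exactly
`n` vertices whose edge expansion is at most `2ε`. -/
theorem stmt16 {V : Type*} [Fintype V] [DecidableEq V]
    (G : SimpleGraph V) [DecidableRel G.Adj] (d : ℕ) (ε : ℝ)
    (hε0 : 0 ≤ ε) (hε1 : ε ≤ 1) (hreg : ∀ v : V, G.degree v = d) :
    (1 : ℝ) - Real.exp (-(ε * Fintype.card V * d) / 6) ≤
      ∑ x : V → Bool, ∑ z : {e // e ∈ G.edgeFinset} → Bool,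
        ((1 : ℝ) / 2 ^ Fintype.card V) *
        (∏ e : {e // e ∈ G.edgeFinset}, if z e then ε else 1 - ε) *
        (if ∃ Vs : Finset (V × Bool), Vs.card = Fintype.card V ∧
            (∑ p ∈ Vs, ∑ q ∈ Vsᶜ,
              if (lift2 G (labelOf G x z)).Adj p q then (1 : ℝ) else 0)
              ≤ 2 * ε * d * Fintype.card V
          then (1 : ℝ) else 0) := by
  set n : ℕ := Fintype.card V with hn
  set M : ℕ := Fintype.card {e // e ∈ G.edgeFinset} with hM
  have hnd : n * d = 2 * M := by
    rw [hM, Fintype.card_coe, ← SimpleGraph.sum_degrees_eq_twice_card_edges]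
    simp [hreg, hn, mul_comm]
  have hndR : (n : ℝ) * d = 2 * M := by exact_mod_cast hnd
  have hw0 : ∀ z : {e // e ∈ G.edgeFinset} → Bool, 0 ≤ ∏ e : {e // e ∈ G.edgeFinset}, if z e then ε else 1 - ε := by
    intro z
    apply Finset.prod_nonneg
    intro e _
    by_cases h : z e <;> simp [h, hε0] <;> linarith
  -- pointwise: the Chernoff event implies the existential event
  have hpt : ∀ (x : V → Bool) (z : {e // e ∈ G.edgeFinset} → Bool),
      (if (((Finset.univ.filter fun e => z e = true).card : ℕ) : ℝ) ≤ 2 * ε * M then (1:ℝ) else 0)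
      ≤ (if ∃ Vs : Finset (V × Bool), Vs.card = n ∧
            (∑ p ∈ Vs, ∑ q ∈ Vsᶜ,
              if (lift2 G (labelOf G x z)).Adj p q then (1 : ℝ) else 0)
              ≤ 2 * ε * d * n
          then (1 : ℝ) else 0) := by
    intro x z
    by_cases h : (((Finset.univ.filter fun e => z e = true).card : ℕ) : ℝ) ≤ 2 * ε * M
    · rw [if_pos h, if_pos]
      refine ⟨univ.image fun v => (v, x v), ?_, ?_⟩
      · rw [Finset.card_image_of_injective _ (fun a b hab => congrArg Prod.fst hab),
          Finset.card_univ]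
      · rw [cut_eq_aux G x z]
        have hS : ∑ e : {e // e ∈ G.edgeFinset}, (if z e then (1:ℝ) else 0)
            = (((Finset.univ.filter fun e => z e = true).card : ℕ) : ℝ) := by
          rw [Finset.sum_boole]
        rw [hS]
        nlinarith [h, hndR]
    · rw [if_neg h]
      split <;> norm_num
  calc (1 : ℝ) - Real.exp (-(ε * n * d) / 6)
      = 1 - Real.exp (-(ε * M) / 3) := by
        congr 1
        congr 1
        linear_combination (-ε/6) * hndR
    _ ≤ ∑ z : {e // e ∈ G.edgeFinset} → Bool, (∏ e : {e // e ∈ G.edgeFinset}, if z e then ε else 1 - ε) *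
          (if (((Finset.univ.filter fun e => z e = true).card : ℕ) : ℝ) ≤ 2 * ε * M then 1 else 0) :=
        chernoff_aux ε hε0 hε1
    _ = ∑ x : V → Bool, ∑ z : {e // e ∈ G.edgeFinset} → Bool,
          ((1 : ℝ) / 2 ^ n) * (∏ e : {e // e ∈ G.edgeFinset}, if z e then ε else 1 - ε) *
          (if (((Finset.univ.filter fun e => z e = true).card : ℕ) : ℝ) ≤ 2 * ε * M then 1 else 0) := by
        rw [Finset.sum_const]
        simp only [← Finset.mul_sum, mul_assoc]
        rw [Finset.card_univ, Fintype.card_fun, Fintype.card_bool, ← hn, nsmul_eq_mul]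
        push_cast
        rw [← mul_assoc, ← mul_assoc, mul_one_div, div_self (by positivity), one_mul]
    _ ≤ _ := by
        apply Finset.sum_le_sum
        intro x _
        apply Finset.sum_le_sum
        intro z _
        exact mul_le_mul_of_nonneg_left (hpt x z)
          (mul_nonneg (by positivity) (hw0 z))
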